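/- arXiv:1912.01339 — 3 statements merged into one kernel-verified Lean document; each statement's English description precedes it below -/
import Mathlib

section
/- Let F : T → X be strongly measurable and B1-integrable on T with respect to μ (hence B1-integrable on every A ∈ 𝒜, with integral denoted ∫_A F dμ). Then for every ε > 0 there exists a countable measurable partition P of T such that for every countable measurable partition {E_j}_{j∈ℕ} of T finer than P and every choice of points t_j ∈ E_j, one has ∑_{j} ‖F(t_j) μ(E_j) − ∫_{E_j} F dμ‖ ≤ ε. -/
open MeasureTheory Filter

/-- A countable measurable partition of the set `A`: a countable family of pairwise
disjoint measurable sets whose union is `A` (empty pieces are allowed so that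
finite partitions are covered; empty pieces contribute nothing). -/
structure MPartition {T : Type*} [MeasurableSpace T] (A : Set T) where
  piece : ℕ → Set T
  measurable : ∀ n, MeasurableSet (piece n)
  disj : Pairwise (Function.onFun Disjoint piece)
  cover : (⋃ n, piece n) = A

/-- `P'` is finer than `P` if every piece of `P'` is contained in some piece of `P`. -/
def MPartition.Finer {T : Type*} [MeasurableSpace T] {A : Set T}
    (P' P : MPartition A) : Prop :=
  ∀ j, ∃ n, P'.piece j ⊆ P.piece n

/-- A choice of tag points, one in each nonempty piece of the partition. -/
def MPartition.IsTagging {T : Type*} [MeasurableSpace T] {A : Set T}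
    (P : MPartition A) (t : ℕ → T) : Prop :=
  ∀ n, (P.piece n).Nonempty → t n ∈ P.piece n

/-- `F : T → X` is `B₁`-integrable on `A` w.r.t. the (finite, nonnegative) measure `μ`,
with integral `I`. -/
def B1IntegralOn {T X : Type*} [MeasurableSpace T] [NormedAddCommGroup X]
    [NormedSpace ℝ X] (F : T → X) (μ : Measure T) (A : Set T) (I : X) : Prop :=
  ∀ ε > (0 : ℝ), ∃ P₀ : MPartition A, ∀ P : MPartition A, P.Finer P₀ →
    ∀ t : ℕ → T, P.IsTagging t →
      limsup (fun n => ‖(∑ i ∈ Finset.range n, (μ (P.piece i)).toReal • F (t i)) - I‖)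
        atTop ≤ ε

/-- `f : T → ℝ` is `B₂`-integrable on `A` w.r.t. the countably additive vector
measure `m`, with integral `I`. -/
def B2IntegralOn {T X : Type*} [MeasurableSpace T] [NormedAddCommGroup X]
    [NormedSpace ℝ X] (f : T → ℝ) (m : VectorMeasure T X) (A : Set T) (I : X) : Prop :=
  ∀ ε > (0 : ℝ), ∃ P₀ : MPartition A, ∀ P : MPartition A, P.Finer P₀ →
    ∀ t : ℕ → T, P.IsTagging t →
      limsup (fun n => ‖(∑ i ∈ Finset.range n, f (t i) • m (P.piece i)) - I‖)
        atTop ≤ ε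

lemma b1_key {T X : Type*} [MeasurableSpace T] [Nonempty T] [NormedAddCommGroup X]
    [NormedSpace ℝ X] (μ : Measure T) [IsFiniteMeasure μ] (F : T → X) {A : Set T}
    {I : X} (hI : B1IntegralOn F μ A I) {x : X} {δ : ℝ} (hδ : 0 ≤ δ)
    (hx : ∀ s ∈ A, ‖F s - x‖ ≤ δ) :
    ‖I - (μ A).toReal • x‖ ≤ δ * (μ A).toReal := by
  refine le_of_forall_pos_le_add fun ε' hε' => ?_
  obtain ⟨P₀, hP₀⟩ := hI (ε' / 2) (by positivity)
  classical
  set t : ℕ → T := fun n => if h : (P₀.piece n).Nonempty then h.choose else Classical.arbitrary T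
    with ht_def
  have ht : P₀.IsTagging t := by
    intro n hn
    simp only [ht_def, dif_pos hn]
    exact hn.choose_spec
  have hlim := hP₀ P₀ (fun j => ⟨j, subset_rfl⟩) t ht
  set S : ℕ → X := fun n => ∑ i ∈ Finset.range n, (μ (P₀.piece i)).toReal • F (t i) with hS
  set c : ℕ → ℝ := fun n => ∑ i ∈ Finset.range n, (μ (P₀.piece i)).toReal with hc_def
  have hμA : ∑' i, μ (P₀.piece i) = μ A := by
    rw [← measure_iUnion P₀.disj P₀.measurable, P₀.cover]
  have hfin : ∀ i, μ (P₀.piece i) ≠ ⊤ := fun i => (measure_lt_top μ _).ne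
  have hsummable : Summable (fun i => (μ (P₀.piece i)).toReal) :=
    ENNReal.summable_toReal (by rw [hμA]; exact measure_ne_top μ A)
  have htsum : ∑' i, (μ (P₀.piece i)).toReal = (μ A).toReal := by
    rw [← ENNReal.tsum_toReal_eq hfin, hμA]
  have hhs : HasSum (fun i => (μ (P₀.piece i)).toReal) (μ A).toReal := by
    rw [← htsum]; exact hsummable.hasSum
  have hc : Tendsto c atTop (nhds (μ A).toReal) := hhs.tendsto_sum_nat
  have hcle : ∀ n, c n ≤ (μ A).toReal := by
    intro n
    rw [← htsum]
    exact Summable.sum_le_tsum _ (fun i _ => ENNReal.toReal_nonneg) hsummable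
  have hcnonneg : ∀ n, 0 ≤ c n := fun n =>
    Finset.sum_nonneg fun i _ => ENNReal.toReal_nonneg
  -- norm bound on F at tags
  have htag : ∀ i, (μ (P₀.piece i)).toReal * ‖F (t i) - x‖ ≤ (μ (P₀.piece i)).toReal * δ := by
    intro i
    rcases Set.eq_empty_or_nonempty (P₀.piece i) with he | hne
    · simp [he]
    · refine mul_le_mul_of_nonneg_left ?_ ENNReal.toReal_nonneg
      refine hx _ ?_
      have := ht i hne
      rw [← P₀.cover]
      exact Set.mem_iUnion.2 ⟨i, this⟩
  have hSc : ∀ n, ‖S n - c n • x‖ ≤ δ * (μ A).toReal := by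
    intro n
    have : S n - c n • x = ∑ i ∈ Finset.range n, (μ (P₀.piece i)).toReal • (F (t i) - x) := by
      simp [hS, hc_def, Finset.sum_smul, smul_sub, Finset.sum_sub_distrib]
    rw [this]
    calc ‖∑ i ∈ Finset.range n, (μ (P₀.piece i)).toReal • (F (t i) - x)‖
        ≤ ∑ i ∈ Finset.range n, ‖(μ (P₀.piece i)).toReal • (F (t i) - x)‖ :=
          norm_sum_le _ _
      _ ≤ ∑ i ∈ Finset.range n, (μ (P₀.piece i)).toReal * δ := by
          refine Finset.sum_le_sum fun i _ => ?_
          rw [norm_smul, Real.norm_eq_abs, abs_of_nonneg ENNReal.toReal_nonneg]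
          exact htag i
      _ = c n * δ := by rw [hc_def, ← Finset.sum_mul]
      _ ≤ (μ A).toReal * δ := mul_le_mul_of_nonneg_right (hcle n) hδ
      _ = δ * (μ A).toReal := mul_comm _ _
  -- boundedness of the limsup sequence
  have hbdd : IsBoundedUnder (· ≤ ·) atTop (fun n => ‖S n - I‖) := by
    refine isBoundedUnder_of ⟨δ * (μ A).toReal + (μ A).toReal * ‖x‖ + ‖I‖, fun n => ?_⟩
    have heq : S n - I = (S n - c n • x) + (c n • x - I) := by abel
    have hcx : ‖c n • x‖ ≤ (μ A).toReal * ‖x‖ := by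
      rw [norm_smul, Real.norm_eq_abs, abs_of_nonneg (hcnonneg n)]
      exact mul_le_mul_of_nonneg_right (hcle n) (norm_nonneg x)
    calc ‖S n - I‖ = ‖(S n - c n • x) + (c n • x - I)‖ := by rw [← heq]
      _ ≤ ‖S n - c n • x‖ + ‖c n • x - I‖ := norm_add_le _ _
      _ ≤ ‖S n - c n • x‖ + (‖c n • x‖ + ‖I‖) := by
          exact add_le_add_right (norm_sub_le _ _) _
      _ ≤ δ * (μ A).toReal + ((μ A).toReal * ‖x‖ + ‖I‖) :=
          add_le_add (hSc n) (add_le_add_left hcx _)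
      _ = δ * (μ A).toReal + (μ A).toReal * ‖x‖ + ‖I‖ := by ring
  have hev1 : ∀ᶠ n in atTop, ‖S n - I‖ < ε' / 2 + ε' / 4 := by
    refine eventually_lt_of_limsup_lt ?_ hbdd
    calc limsup (fun n => ‖S n - I‖) atTop ≤ ε' / 2 := hlim
      _ < ε' / 2 + ε' / 4 := by linarith
  have hev2 : ∀ᶠ n in atTop, |c n - (μ A).toReal| < ε' / (4 * (‖x‖ + 1)) := by
    have hpos : (0:ℝ) < ε' / (4 * (‖x‖ + 1)) := by positivity
    have := Metric.tendsto_atTop.mp hc _ hpos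
    obtain ⟨N, hN⟩ := this
    exact eventually_atTop.2 ⟨N, fun n hn => by simpa [Real.dist_eq] using hN n hn⟩
  obtain ⟨n, h1, h2⟩ := (hev1.and hev2).exists
  have key : ‖I - (μ A).toReal • x‖ ≤ ‖S n - I‖ + ‖S n - c n • x‖ + ‖c n • x - (μ A).toReal • x‖ := by
    have : I - (μ A).toReal • x = -(S n - I) + (S n - c n • x) + (c n • x - (μ A).toReal • x) := by
      abel
    rw [this]
    calc ‖-(S n - I) + (S n - c n • x) + (c n • x - (μ A).toReal • x)‖
        ≤ ‖-(S n - I) + (S n - c n • x)‖ + ‖c n • x - (μ A).toReal • x‖ := norm_add_le _ _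
      _ ≤ ‖-(S n - I)‖ + ‖S n - c n • x‖ + ‖c n • x - (μ A).toReal • x‖ := by
          gcongr; exact norm_add_le _ _
      _ = ‖S n - I‖ + ‖S n - c n • x‖ + ‖c n • x - (μ A).toReal • x‖ := by rw [norm_neg]
  have hlast : ‖c n • x - (μ A).toReal • x‖ ≤ ε' / 4 := by
    rw [← sub_smul, norm_smul, Real.norm_eq_abs]
    have h3 : |c n - (μ A).toReal| * ‖x‖ ≤ (ε' / (4 * (‖x‖ + 1))) * (‖x‖ + 1) :=
      mul_le_mul h2.le (by linarith [norm_nonneg x]) (norm_nonneg x) (by positivity)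
    have h4 : (ε' / (4 * (‖x‖ + 1))) * (‖x‖ + 1) = ε' / 4 := by
      have hx1 : (‖x‖ + 1) ≠ 0 := by positivity
      field_simp
    linarith
  calc ‖I - (μ A).toReal • x‖
      ≤ ‖S n - I‖ + ‖S n - c n • x‖ + ‖c n • x - (μ A).toReal • x‖ := key
    _ ≤ (ε' / 2 + ε' / 4) + δ * (μ A).toReal + ε' / 4 :=
        add_le_add (add_le_add h1.le (hSc n)) hlast
    _ = δ * (μ A).toReal + ε' := by ring

/-- Theorem 1 / \cite[Theorem 3.14]{cdpmsxweber}.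
If the strongly measurable `F` is `B₁`-integrable on `T` (hence on every
measurable `A`, with integral `ν A = ∫_A F dμ`), then for every `ε > 0` there is a
countable measurable partition `P₀` of `T` such that for every finer countable
measurable partition `{E_j}` and every choice of tags `t_j ∈ E_j`,
`∑_j ‖F (t_j) μ(E_j) − ∫_{E_j} F dμ‖ ≤ ε` (expressed via its partial sums, the
summands being nonnegative). -/
theorem statement0 {T X : Type*} [MeasurableSpace T] [NormedAddCommGroup X]
    [NormedSpace ℝ X] (μ : Measure T) [IsFiniteMeasure μ]
    (F : T → X) (hF : StronglyMeasurable F)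
    (ν : Set T → X)
    (hν : ∀ A : Set T, MeasurableSet A → B1IntegralOn F μ A (ν A))
    (hT : B1IntegralOn F μ Set.univ (ν Set.univ)) :
    ∀ ε > (0 : ℝ), ∃ P₀ : MPartition (Set.univ : Set T),
      ∀ P : MPartition (Set.univ : Set T), P.Finer P₀ →
        ∀ t : ℕ → T, P.IsTagging t →
          ∀ n : ℕ,
            ∑ j ∈ Finset.range n,
              ‖(μ (P.piece j)).toReal • F (t j) - ν (P.piece j)‖ ≤ ε := by
  intro ε hε
  rcases isEmpty_or_nonempty T with hT0 | hT0
  · refine ⟨⟨fun _ => ∅, fun _ => MeasurableSet.empty,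
      fun i j hij => by simp [Function.onFun], by
        have : (Set.univ : Set T) = ∅ := Set.eq_empty_of_isEmpty _
        simp [this]⟩, ?_⟩
    intro P hP t
    exact (hT0.false (t 0)).elim
  · set M := (μ Set.univ).toReal with hMdef
    have hM : 0 ≤ M := ENNReal.toReal_nonneg
    set δ := ε / (2 * (M + 1)) with hδdef
    have hδ : 0 < δ := by positivity
    obtain ⟨cset, hc_count, hc_sub⟩ := hF.isSeparable_range
    have hcne : cset.Nonempty := by
      by_contra hemp
      rw [Set.not_nonempty_iff_eq_empty] at hemp
      have : F (Classical.arbitrary T) ∈ closure cset := hc_sub (Set.mem_range_self _)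
      rw [hemp, closure_empty] at this
      exact this
    obtain ⟨x, hx_eq⟩ := hc_count.exists_eq_range hcne
    set B : ℕ → Set T := fun n => {s | ‖F s - x n‖ < δ} with hBdef
    have hBmeas : ∀ n, MeasurableSet (B n) := fun n =>
      ((hF.sub stronglyMeasurable_const).norm).measurable measurableSet_Iio
    have hBcover : ⋃ n, B n = Set.univ := by
      ext s
      simp only [Set.mem_iUnion, Set.mem_univ, iff_true]
      have hmem : F s ∈ closure cset := hc_sub (Set.mem_range_self s)
      rw [hx_eq] at hmem
      obtain ⟨b, hb, hdist⟩ := Metric.mem_closure_iff.mp hmem δ hδ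
      obtain ⟨m, rfl⟩ := hb
      exact ⟨m, by simpa [hBdef, dist_eq_norm] using hdist⟩
    refine ⟨⟨disjointed B, MeasurableSet.disjointed hBmeas, disjoint_disjointed B,
      by rw [iUnion_disjointed, hBcover]⟩, ?_⟩
    intro P hP t ht n
    have hterm : ∀ j, ‖(μ (P.piece j)).toReal • F (t j) - ν (P.piece j)‖
        ≤ 2 * δ * (μ (P.piece j)).toReal := by
      intro j
      rcases Set.eq_empty_or_nonempty (P.piece j) with he | hne
      · have h0 := b1_key μ F (hν _ (P.measurable j)) (le_refl (0:ℝ))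
          (x := x 0) (by intro s hs; rw [he] at hs; exact hs.elim)
        rw [he] at h0 ⊢
        simp only [measure_empty, ENNReal.toReal_zero, zero_smul, zero_mul, sub_zero,
          mul_zero] at h0 ⊢
        rw [norm_le_zero_iff] at h0
        simp [h0]
      · obtain ⟨m, hm⟩ := hP j
        have hsub : P.piece j ⊆ B m := hm.trans (disjointed_subset B m)
        have hxA : ∀ s ∈ P.piece j, ‖F s - x m‖ ≤ δ := fun s hs => (hsub hs).le
        have hkey := b1_key μ F (hν _ (P.measurable j)) hδ.le hxA
        have htj : ‖F (t j) - x m‖ ≤ δ := (hsub (ht j hne)).le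
        set a := (μ (P.piece j)).toReal with hadef
        have ha : 0 ≤ a := ENNReal.toReal_nonneg
        calc ‖a • F (t j) - ν (P.piece j)‖
            ≤ ‖a • F (t j) - a • x m‖ + ‖a • x m - ν (P.piece j)‖ := by
              have : a • F (t j) - ν (P.piece j)
                  = (a • F (t j) - a • x m) + (a • x m - ν (P.piece j)) := by abel
              rw [this]; exact norm_add_le _ _
          _ ≤ δ * a + δ * a := by
              refine add_le_add ?_ ?_
              · rw [← smul_sub, norm_smul, Real.norm_eq_abs, abs_of_nonneg ha, mul_comm]
                exact mul_le_mul_of_nonneg_right htj ha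
              · rw [norm_sub_rev]; exact hkey
          _ = 2 * δ * a := by ring
    have hsum_meas : ∑ j ∈ Finset.range n, (μ (P.piece j)).toReal ≤ M := by
      have h1 : ∑ j ∈ Finset.range n, μ (P.piece j) = μ (⋃ j ∈ Finset.range n, P.piece j) :=
        (measure_biUnion_finset (fun i _ j _ hij => P.disj hij)
          (fun b _ => P.measurable b)).symm
      have h2 : μ (⋃ j ∈ Finset.range n, P.piece j) ≤ μ Set.univ := measure_mono (by simp)
      rw [← ENNReal.toReal_sum (fun a _ => measure_ne_top μ _)] at *
      rw [hMdef]
      exact ENNReal.toReal_le_toReal (by rw [h1]; exact (h2.trans_lt (measure_lt_top μ _)).ne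
        ) (measure_ne_top μ _) |>.mpr (h1 ▸ h2)
    calc ∑ j ∈ Finset.range n, ‖(μ (P.piece j)).toReal • F (t j) - ν (P.piece j)‖
        ≤ ∑ j ∈ Finset.range n, 2 * δ * (μ (P.piece j)).toReal :=
          Finset.sum_le_sum fun j _ => hterm j
      _ = 2 * δ * ∑ j ∈ Finset.range n, (μ (P.piece j)).toReal := by
          rw [Finset.mul_sum]
      _ ≤ 2 * δ * M := by
          exact mul_le_mul_of_nonneg_left hsum_meas (by positivity)
      _ ≤ ε := by
          have hδε : δ * (2 * (M + 1)) = ε := by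
            rw [hδdef]; field_simp
          nlinarith [hδ.le, hM]
end

section
/- Let f : T → ℝ be measurable and let F : T → X be strongly measurable and B1-integrable on T with respect to μ, and set M(A) := ∫_A F dμ for A ∈ 𝒜. Then the product t ↦ f(t) F(t) is strongly measurable, and for every ε > 0 there exists a countable measurable partition P of T such that for every countable measurable partition {E_k}_{k∈ℕ} of T finer than P and every choice of points t_k ∈ E_k, one has ∑_k ‖f(t_k) F(t_k) μ(E_k) − f(t_k) M(E_k)‖ ≤ 2ε. -/
open MeasureTheory Filter

section Aux

lemma nu_empty_aux {T X : Type*} [MeasurableSpace T] [NormedAddCommGroup X] [NormedSpace ℝ X]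
    (μ : Measure T) (F : T → X) {I : X} (hI : B1IntegralOn F μ (∅ : Set T) I) (t₀ : T) :
    I = 0 := by
  classical
  have h : ∀ ε > (0:ℝ), ‖I‖ ≤ ε := by
    intro ε hε
    obtain ⟨P₁, hP₁⟩ := hI ε hε
    have hpieces : ∀ n, P₁.piece n = ∅ := fun n =>
      Set.subset_empty_iff.1 ((Set.subset_iUnion P₁.piece n).trans P₁.cover.subset)
    have h2 := hP₁ P₁ (fun j => ⟨j, subset_rfl⟩) (fun _ => t₀)
      (fun n hn => absurd hn (by simp [hpieces n]))
    simpa [hpieces, limsup_const] using h2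
  by_contra h0
  have hI0 : 0 < ‖I‖ := norm_pos_iff.2 h0
  have := h (‖I‖/2) (by linarith)
  linarith

lemma lemA {T X : Type*} [MeasurableSpace T] [NormedAddCommGroup X] [NormedSpace ℝ X]
    (μ : Measure T) [IsFiniteMeasure μ] (F : T → X) {A : Set T} {I : X}
    (hI : B1IntegralOn F μ A I) {δ : ℝ} (hδ : 0 ≤ δ)
    (hosc : ∀ s ∈ A, ∀ u ∈ A, ‖F s - F u‖ ≤ δ) {t₀ : T} (ht₀ : t₀ ∈ A) :
    ‖I - (μ A).toReal • F t₀‖ ≤ δ * (μ A).toReal := by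
  classical
  refine le_of_forall_pos_le_add fun ε' hε' => ?_
  obtain ⟨P₁, hP₁⟩ := hI (ε'/3) (by linarith)
  set s : ℕ → T := fun n => if h : (P₁.piece n).Nonempty then h.choose else t₀ with hs
  have hstag : P₁.IsTagging s := by
    intro n hn
    simp only [hs, dif_pos hn]
    exact hn.choose_spec
  have hsA : ∀ n, s n ∈ A := by
    intro n
    by_cases h : (P₁.piece n).Nonempty
    · have h1 := hstag n h
      have : P₁.piece n ⊆ A := (Set.subset_iUnion P₁.piece n).trans P₁.cover.subset
      exact this h1
    · simp only [hs, dif_neg h]; exact ht₀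
  have hlim := hP₁ P₁ (fun j => ⟨j, subset_rfl⟩) s hstag
  set S : ℕ → X := fun n => ∑ i ∈ Finset.range n, (μ (P₁.piece i)).toReal • F (s i) with hS
  have hsum : ∑' i, μ (P₁.piece i) = μ A := by
    rw [← measure_iUnion P₁.disj P₁.measurable, P₁.cover]
  have hfin : ∑' i, μ (P₁.piece i) ≠ ⊤ := by rw [hsum]; exact measure_ne_top μ A
  have hHS : HasSum (fun i => (μ (P₁.piece i)).toReal) (μ A).toReal := by
    have h := ENNReal.hasSum_toReal hfin
    rwa [← ENNReal.tsum_toReal_eq (fun i => measure_ne_top μ _), hsum] at h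
  have htend : Tendsto (fun n => ∑ i ∈ Finset.range n, (μ (P₁.piece i)).toReal)
      atTop (nhds (μ A).toReal) := hHS.tendsto_sum_nat
  have hpartial_le : ∀ n, ∑ i ∈ Finset.range n, (μ (P₁.piece i)).toReal ≤ (μ A).toReal :=
    fun n => sum_le_hasSum _ (fun i _ => ENNReal.toReal_nonneg) hHS
  have h3 : ∀ n, ‖S n - (∑ i ∈ Finset.range n, (μ (P₁.piece i)).toReal) • F t₀‖
      ≤ δ * (μ A).toReal := by
    intro n
    rw [hS, Finset.sum_smul, ← Finset.sum_sub_distrib]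
    calc ‖∑ i ∈ Finset.range n, ((μ (P₁.piece i)).toReal • F (s i)
            - (μ (P₁.piece i)).toReal • F t₀)‖
        ≤ ∑ i ∈ Finset.range n, ‖(μ (P₁.piece i)).toReal • F (s i)
            - (μ (P₁.piece i)).toReal • F t₀‖ := norm_sum_le _ _
      _ ≤ ∑ i ∈ Finset.range n, (μ (P₁.piece i)).toReal * δ := by
          refine Finset.sum_le_sum fun i _ => ?_
          rw [← smul_sub, norm_smul, Real.norm_eq_abs,
            abs_of_nonneg ENNReal.toReal_nonneg]
          exact mul_le_mul_of_nonneg_left (hosc _ (hsA i) _ ht₀) ENNReal.toReal_nonneg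
      _ = (∑ i ∈ Finset.range n, (μ (P₁.piece i)).toReal) * δ := by
          rw [Finset.sum_mul]
      _ ≤ (μ A).toReal * δ := mul_le_mul_of_nonneg_right (hpartial_le n) hδ
      _ = δ * (μ A).toReal := mul_comm _ _
  have h4 : ∀ᶠ n in atTop, ‖S n - (μ A).toReal • F t₀‖ ≤ δ * (μ A).toReal + ε'/3 := by
    have ht0 : Tendsto (fun n => |(∑ i ∈ Finset.range n, (μ (P₁.piece i)).toReal)
        - (μ A).toReal| * ‖F t₀‖) atTop (nhds 0) := by
      have := ((htend.sub_const (μ A).toReal).abs).mul_const ‖F t₀‖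
      simpa using this
    have hev : ∀ᶠ n in atTop, |(∑ i ∈ Finset.range n, (μ (P₁.piece i)).toReal)
        - (μ A).toReal| * ‖F t₀‖ < ε'/3 :=
      ht0.eventually (eventually_lt_nhds (by linarith : (0:ℝ) < ε'/3))
    filter_upwards [hev] with n hn
    have step : ‖S n - (μ A).toReal • F t₀‖
        ≤ ‖S n - (∑ i ∈ Finset.range n, (μ (P₁.piece i)).toReal) • F t₀‖
          + ‖((∑ i ∈ Finset.range n, (μ (P₁.piece i)).toReal) - (μ A).toReal) • F t₀‖ := by
      have e : S n - (μ A).toReal • F t₀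
          = (S n - (∑ i ∈ Finset.range n, (μ (P₁.piece i)).toReal) • F t₀)
            + ((∑ i ∈ Finset.range n, (μ (P₁.piece i)).toReal) - (μ A).toReal) • F t₀ := by
        rw [sub_smul]; abel
      rw [e]; exact norm_add_le _ _
    have h5 : ‖((∑ i ∈ Finset.range n, (μ (P₁.piece i)).toReal) - (μ A).toReal) • F t₀‖
        ≤ ε'/3 := by
      rw [norm_smul, Real.norm_eq_abs]; exact le_of_lt hn
    linarith [h3 n, step]
  have hbdd : IsBoundedUnder (· ≤ ·) atTop (fun n => ‖S n - I‖) := by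
    refine isBoundedUnder_of ⟨(μ A).toReal * (δ + ‖F t₀‖) + ‖I‖, fun n => ?_⟩
    have h1 : ‖S n‖ ≤ (μ A).toReal * (δ + ‖F t₀‖) := by
      calc ‖S n‖ ≤ ∑ i ∈ Finset.range n, ‖(μ (P₁.piece i)).toReal • F (s i)‖ := norm_sum_le _ _
        _ ≤ ∑ i ∈ Finset.range n, (μ (P₁.piece i)).toReal * (δ + ‖F t₀‖) := by
            refine Finset.sum_le_sum fun i _ => ?_
            rw [norm_smul, Real.norm_eq_abs, abs_of_nonneg ENNReal.toReal_nonneg]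
            refine mul_le_mul_of_nonneg_left ?_ ENNReal.toReal_nonneg
            calc ‖F (s i)‖ = ‖(F (s i) - F t₀) + F t₀‖ := by rw [sub_add_cancel]
              _ ≤ ‖F (s i) - F t₀‖ + ‖F t₀‖ := norm_add_le _ _
              _ ≤ δ + ‖F t₀‖ := add_le_add_left (hosc _ (hsA i) _ ht₀) _
        _ = (∑ i ∈ Finset.range n, (μ (P₁.piece i)).toReal) * (δ + ‖F t₀‖) := by
            rw [Finset.sum_mul]
        _ ≤ (μ A).toReal * (δ + ‖F t₀‖) := by
            refine mul_le_mul_of_nonneg_right (hpartial_le n) ?_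
            positivity
    calc ‖S n - I‖ ≤ ‖S n‖ + ‖I‖ := norm_sub_le _ _
      _ ≤ (μ A).toReal * (δ + ‖F t₀‖) + ‖I‖ := by linarith
  have h5 : ∀ᶠ n in atTop, ‖S n - I‖ < ε'/2 :=
    eventually_lt_of_limsup_lt (lt_of_le_of_lt hlim (by linarith)) hbdd
  obtain ⟨n, hn4, hn5⟩ := (h4.and h5).exists
  have habs : ‖I - (μ A).toReal • F t₀‖ ≤ ‖S n - I‖ + ‖S n - (μ A).toReal • F t₀‖ := by
    have e : I - (μ A).toReal • F t₀ = -(S n - I) + (S n - (μ A).toReal • F t₀) := by abel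
    rw [e]
    calc ‖-(S n - I) + (S n - (μ A).toReal • F t₀)‖
        ≤ ‖-(S n - I)‖ + ‖S n - (μ A).toReal • F t₀‖ := norm_add_le _ _
      _ = ‖S n - I‖ + ‖S n - (μ A).toReal • F t₀‖ := by rw [norm_neg]
  linarith

lemma group_le {T : Type*} [MeasurableSpace T] (μ : Measure T) [IsFiniteMeasure μ]
    (E C : ℕ → Set T) (hEm : ∀ k, MeasurableSet (E k))
    (hdisj : Pairwise (Function.onFun Disjoint E))
    (idx : ℕ → ℕ) (hsub : ∀ k, E k ⊆ C (idx k))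
    (c : ℕ → ℝ) (hc : ∀ n, 0 ≤ c n) {B : ℝ}
    (hB : ∀ t : Finset ℕ, ∑ d ∈ t, c d * (μ (C d)).toReal ≤ B)
    (s : Finset ℕ) :
    ∑ k ∈ s, c (idx k) * (μ (E k)).toReal ≤ B := by
  classical
  calc ∑ k ∈ s, c (idx k) * (μ (E k)).toReal
      = ∑ d ∈ s.image idx, ∑ k ∈ s.filter (fun k => idx k = d),
          c (idx k) * (μ (E k)).toReal :=
        (Finset.sum_fiberwise_of_maps_to (fun k hk => Finset.mem_image_of_mem idx hk) _).symm
    _ ≤ ∑ d ∈ s.image idx, c d * (μ (C d)).toReal := by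
        refine Finset.sum_le_sum fun d _ => ?_
        have h1 : ∑ k ∈ s.filter (fun k => idx k = d), c (idx k) * (μ (E k)).toReal
            = c d * ∑ k ∈ s.filter (fun k => idx k = d), (μ (E k)).toReal := by
          rw [Finset.mul_sum]
          refine Finset.sum_congr rfl fun k hk => ?_
          rw [(Finset.mem_filter.1 hk).2]
        rw [h1]
        refine mul_le_mul_of_nonneg_left ?_ (hc d)
        have h2 : ∑ k ∈ s.filter (fun k => idx k = d), (μ (E k)).toReal
            = (∑ k ∈ s.filter (fun k => idx k = d), μ (E k)).toReal :=
          (ENNReal.toReal_sum fun k _ => measure_ne_top μ _).symm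
        rw [h2, ← measure_biUnion_finset (fun i _ j _ hij => hdisj hij)
          (fun k _ => hEm k)]
        refine ENNReal.toReal_mono (measure_ne_top μ _) (measure_mono ?_)
        refine Set.iUnion₂_subset fun k hk => ?_
        rw [← (Finset.mem_filter.1 hk).2]
        exact hsub k
    _ ≤ B := hB _

end Aux

/-- Remark 1.
If `f : T → ℝ` is measurable and `F` is strongly measurable and `B₁`-integrable on
`T` w.r.t. `μ` (with `M A = ν A = ∫_A F dμ` for every measurable `A`), then the
product `t ↦ f t • F t` is strongly measurable and for every `ε > 0` there is a
countable measurable partition `P₀` of `T` such that for every finer countable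
measurable partition `{E_k}` and every choice of tags `t_k ∈ E_k`,
`∑_k ‖f (t_k) F (t_k) μ(E_k) − f (t_k) M(E_k)‖ ≤ 2ε` (expressed via partial sums,
the summands being nonnegative). -/
theorem statement1 {T X : Type*} [MeasurableSpace T] [NormedAddCommGroup X]
    [NormedSpace ℝ X] (μ : Measure T) [IsFiniteMeasure μ]
    (f : T → ℝ) (hf : Measurable f)
    (F : T → X) (hF : StronglyMeasurable F)
    (ν : Set T → X)
    (hν : ∀ A : Set T, MeasurableSet A → B1IntegralOn F μ A (ν A))
    (hT : B1IntegralOn F μ Set.univ (ν Set.univ)) :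
    StronglyMeasurable (fun t => f t • F t) ∧
    ∀ ε > (0 : ℝ), ∃ P₀ : MPartition (Set.univ : Set T),
      ∀ P : MPartition (Set.univ : Set T), P.Finer P₀ →
        ∀ t : ℕ → T, P.IsTagging t →
          ∀ n : ℕ,
            ∑ k ∈ Finset.range n,
              ‖f (t k) • ((μ (P.piece k)).toReal • F (t k)) - f (t k) • ν (P.piece k)‖
                ≤ 2 * ε := by
  classical
  constructor
  · exact hf.stronglyMeasurable.smul hF
  intro ε hε
  borelize X
  have hFm : Measurable F := hF.measurable
  set Mm : ℝ := (μ Set.univ).toReal with hMm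
  have hMm0 : (0:ℝ) ≤ Mm := ENNReal.toReal_nonneg
  have hK : (0:ℝ) < Mm + 1 := by linarith
  -- dense sequence in the (separable) range of F
  obtain ⟨D, hDc, hDsub⟩ := hF.isSeparable_range
  obtain ⟨x, hx⟩ := (hDc.insert 0).exists_eq_range (Set.insert_nonempty 0 D)
  have hdense : ∀ (u : T) (ρ : ℝ), 0 < ρ → ∃ j, dist (F u) (x j) < ρ := by
    intro u ρ hρ
    have h1 : F u ∈ closure (Set.range x) := by
      rw [← hx]
      exact closure_mono (Set.subset_insert 0 D) (hDsub (Set.mem_range_self u))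
    rw [Metric.mem_closure_iff] at h1
    obtain ⟨y, hy, hdy⟩ := h1 ρ hρ
    obtain ⟨j, rfl⟩ := hy
    exact ⟨j, hdy⟩
  -- radii
  set r : ℕ → ℝ := fun m => ε / (2 ^ (m + 2) * (m + 1) * (Mm + 1)) with hr
  have hrpos : ∀ m, 0 < r m := by
    intro m
    apply div_pos hε
    positivity
  -- level sets of f
  set A : ℕ → Set T := fun m => {u | (m : ℝ) ≤ |f u| ∧ |f u| < m + 1} with hA
  have hfabs : Measurable fun u => |f u| := hf.abs
  have hAmeas : ∀ m, MeasurableSet (A m) := fun m =>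
    (measurableSet_le measurable_const hfabs).inter (measurableSet_lt hfabs measurable_const)
  have hAuniq : ∀ (u : T) (m m' : ℕ), u ∈ A m → u ∈ A m' → m = m' := by
    intro u m m' h1 h2
    by_contra hne
    rcases Nat.lt_or_ge m m' with h | h
    · have hc : ((m:ℝ) + 1) ≤ (m' : ℝ) := by exact_mod_cast h
      have := h1.2; have := h2.1; linarith
    · have h' : m' < m := lt_of_le_of_ne h (Ne.symm hne)
      have hc : ((m':ℝ) + 1) ≤ (m : ℝ) := by exact_mod_cast h'
      have := h2.2; have := h1.1; linarith
  -- ball preimages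
  set G : ℕ → ℕ → Set T := fun m j => F ⁻¹' Metric.ball (x j) (r m) with hG
  have hGmeas : ∀ m j, MeasurableSet (G m j) := fun m j => hFm measurableSet_ball
  -- pieces
  set C : ℕ → Set T := fun n =>
    A n.unpair.1 ∩ (G n.unpair.1 n.unpair.2 \ ⋃ j < n.unpair.2, G n.unpair.1 j) with hC
  have hCmeas : ∀ n, MeasurableSet (C n) := by
    intro n
    exact (hAmeas _).inter ((hGmeas _ _).diff
      (MeasurableSet.biUnion (Set.to_countable _) fun j _ => hGmeas _ _))
  have hCsubA : ∀ n, C n ⊆ A n.unpair.1 := fun n => Set.inter_subset_left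
  have hCsubG : ∀ n, C n ⊆ G n.unpair.1 n.unpair.2 := fun n u hu => hu.2.1
  have hCdisj : Pairwise (Function.onFun Disjoint C) := by
    intro a b hab
    rw [Function.onFun, Set.disjoint_left]
    intro u hua hub
    apply hab
    have hm : a.unpair.1 = b.unpair.1 := hAuniq u _ _ hua.1 hub.1
    have hj : a.unpair.2 = b.unpair.2 := by
      by_contra hne
      rcases Nat.lt_or_ge a.unpair.2 b.unpair.2 with h | h
      · exact hub.2.2 (Set.mem_iUnion₂.2 ⟨a.unpair.2, h, by rw [← hm]; exact hua.2.1⟩)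
      · have h' : b.unpair.2 < a.unpair.2 := lt_of_le_of_ne h (Ne.symm hne)
        exact hua.2.2 (Set.mem_iUnion₂.2 ⟨b.unpair.2, h', by rw [hm]; exact hub.2.1⟩)
    calc a = Nat.pair a.unpair.1 a.unpair.2 := (Nat.pair_unpair a).symm
      _ = Nat.pair b.unpair.1 b.unpair.2 := by rw [hm, hj]
      _ = b := Nat.pair_unpair b
  have hCcover : (⋃ n, C n) = (Set.univ : Set T) := by
    ext u
    simp only [Set.mem_iUnion, Set.mem_univ, iff_true]
    have huA : u ∈ A ⌊|f u|⌋₊ := ⟨Nat.floor_le (abs_nonneg _), Nat.lt_floor_add_one _⟩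
    have hex : ∃ j, dist (F u) (x j) < r ⌊|f u|⌋₊ := hdense u _ (hrpos _)
    refine ⟨Nat.pair ⌊|f u|⌋₊ (Nat.find hex), ?_⟩
    simp only [hC, Nat.unpair_pair]
    refine ⟨huA, ?_, ?_⟩
    · exact Metric.mem_ball.2 (Nat.find_spec hex)
    · intro hmem
      obtain ⟨j', hj', hball⟩ := Set.mem_iUnion₂.1 hmem
      exact Nat.find_min hex hj' (Metric.mem_ball.1 hball)
  refine ⟨⟨C, hCmeas, hCdisj, hCcover⟩, ?_⟩
  intro P hfin t ht n
  choose d hd using hfin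
  have hν0 : ν ∅ = 0 := nu_empty_aux μ F (hν ∅ MeasurableSet.empty) (t 0)
  set cfun : ℕ → ℝ := fun n' => 2 * ((n'.unpair.1 : ℝ) + 1) * r n'.unpair.1 with hcfun
  have hcnn : ∀ n', 0 ≤ cfun n' := by
    intro n'
    have := (hrpos n'.unpair.1).le
    positivity
  have key : ∀ k, ‖f (t k) • ((μ (P.piece k)).toReal • F (t k)) - f (t k) • ν (P.piece k)‖
      ≤ cfun (d k) * (μ (P.piece k)).toReal := by
    intro k
    by_cases hne : (P.piece k).Nonempty
    · have htk := ht k hne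
      have hsubC : P.piece k ⊆ C (d k) := hd k
      have hoscE : ∀ s ∈ P.piece k, ∀ u ∈ P.piece k,
          ‖F s - F u‖ ≤ 2 * r (d k).unpair.1 := by
        intro s hs u hu
        have h1 : dist (F s) (x (d k).unpair.2) < r (d k).unpair.1 :=
          Metric.mem_ball.1 (hCsubG (d k) (hsubC hs))
        have h2 : dist (F u) (x (d k).unpair.2) < r (d k).unpair.1 :=
          Metric.mem_ball.1 (hCsubG (d k) (hsubC hu))
        rw [← dist_eq_norm]
        calc dist (F s) (F u) ≤ dist (F s) (x (d k).unpair.2)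
            + dist (F u) (x (d k).unpair.2) := dist_triangle_right _ _ _
          _ ≤ 2 * r (d k).unpair.1 := by linarith
      have hlem := lemA μ F (hν (P.piece k) (P.measurable k))
        (by linarith [(hrpos (d k).unpair.1).le] : (0:ℝ) ≤ 2 * r (d k).unpair.1) hoscE htk
      have hfb : |f (t k)| ≤ ((d k).unpair.1 : ℝ) + 1 :=
        le_of_lt (hCsubA (d k) (hsubC htk)).2
      calc ‖f (t k) • ((μ (P.piece k)).toReal • F (t k)) - f (t k) • ν (P.piece k)‖
          = |f (t k)| * ‖(μ (P.piece k)).toReal • F (t k) - ν (P.piece k)‖ := by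
            rw [← smul_sub, norm_smul, Real.norm_eq_abs]
        _ = |f (t k)| * ‖ν (P.piece k) - (μ (P.piece k)).toReal • F (t k)‖ := by
            rw [norm_sub_rev]
        _ ≤ (((d k).unpair.1 : ℝ) + 1) * (2 * r (d k).unpair.1 * (μ (P.piece k)).toReal) := by
            refine mul_le_mul hfb hlem (norm_nonneg _) ?_
            positivity
        _ = cfun (d k) * (μ (P.piece k)).toReal := by rw [hcfun]; ring
    · have he : P.piece k = ∅ := Set.not_nonempty_iff_eq_empty.1 hne
      rw [he, hν0, measure_empty]
      simp
  have hgeom : ∀ s : Finset ℕ, ∑ m' ∈ s, ε * (1/2:ℝ) ^ (m' + 1) ≤ ε := by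
    intro s
    obtain ⟨N, hN⟩ := s.exists_nat_subset_range
    calc ∑ m' ∈ s, ε * (1/2:ℝ) ^ (m' + 1)
        ≤ ∑ m' ∈ Finset.range N, ε * (1/2:ℝ) ^ (m' + 1) :=
          Finset.sum_le_sum_of_subset_of_nonneg hN (fun i _ _ => by positivity)
      _ = (ε/2) * ∑ m' ∈ Finset.range N, (1/2:ℝ) ^ m' := by
          rw [Finset.mul_sum]
          refine Finset.sum_congr rfl fun i _ => ?_
          ring
      _ ≤ (ε/2) * 2 := by
          refine mul_le_mul_of_nonneg_left (sum_geometric_two_le N) ?_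
          linarith
      _ = ε := by ring
  have hBA : ∀ t'' : Finset ℕ,
      ∑ m' ∈ t'', (2 * ((m':ℝ) + 1) * r m') * (μ (A m')).toReal ≤ 2 * ε := by
    intro t''
    have hterm : ∀ m' : ℕ, (2 * ((m':ℝ) + 1) * r m') * (μ (A m')).toReal
        ≤ ε * (1/2:ℝ) ^ (m' + 1) := by
      intro m'
      have hμA : (μ (A m')).toReal ≤ Mm :=
        ENNReal.toReal_mono (measure_ne_top μ _) (measure_mono (Set.subset_univ _))
      have hμA0 : (0:ℝ) ≤ (μ (A m')).toReal := ENNReal.toReal_nonneg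
      have hr' : 2 * ((m':ℝ) + 1) * r m' = ε / (2 ^ (m' + 1) * (Mm + 1)) := by
        rw [hr]
        have h1 : ((m':ℝ) + 1) ≠ 0 := by positivity
        have h2 : (2:ℝ) ^ (m' + 2) ≠ 0 := by positivity
        have h3 : (Mm + 1) ≠ 0 := by positivity
        field_simp
        ring
      rw [hr']
      have hp : (0:ℝ) < 2 ^ (m' + 1) := by positivity
      have hhalf : ε * (1/2:ℝ) ^ (m' + 1) = ε / 2 ^ (m' + 1) := by
        rw [div_pow, one_pow]
        ring
      rw [hhalf, div_mul_eq_mul_div, div_le_div_iff₀ (by positivity) hp]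
      have : ε * (μ (A m')).toReal ≤ ε * (Mm + 1) := by nlinarith
      nlinarith
    calc ∑ m' ∈ t'', (2 * ((m':ℝ) + 1) * r m') * (μ (A m')).toReal
        ≤ ∑ m' ∈ t'', ε * (1/2:ℝ) ^ (m' + 1) := Finset.sum_le_sum fun m' _ => hterm m'
      _ ≤ ε := hgeom t''
      _ ≤ 2 * ε := by linarith
  have hBmain : ∀ t' : Finset ℕ, ∑ d' ∈ t', cfun d' * (μ (C d')).toReal ≤ 2 * ε := by
    intro t'
    exact group_le μ C A hCmeas hCdisj (fun n' => n'.unpair.1) hCsubA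
      (fun m' => 2 * ((m':ℝ) + 1) * r m')
      (fun m' => by have := (hrpos m').le; positivity) hBA t'
  calc ∑ k ∈ Finset.range n,
        ‖f (t k) • ((μ (P.piece k)).toReal • F (t k)) - f (t k) • ν (P.piece k)‖
      ≤ ∑ k ∈ Finset.range n, cfun (d k) * (μ (P.piece k)).toReal :=
        Finset.sum_le_sum fun k _ => key k
    _ ≤ 2 * ε := group_le μ P.piece C P.measurable P.disj d hd cfun hcnn hBmain _
end

section
/- (Girsanov-type theorem: martingale property under the new measure.) Let (T, 𝒜, μ) be a finite measure space, X a Banach space, Φ : T → X Bochner integrable, and let M be the X-valued measure M(A) := ∫_A Φ dμ. Fix S > 0, q > 0, and for each s ∈ [0,S] let w_s : T → ℝ be measurable and bounded; set w̃_s := w_s + s·q, and let ℰ_s denote the σ-algebra generated by {w_r : r ≤ s}. Let g_s : ℝ → ℝ be Borel measurable for each s ∈ [0,S], and assume: (i) for each s ∈ [0,S] the functions t ↦ g_s(w̃_s(t)) • Φ(t) and t ↦ w̃_s(t) g_s(w̃_s(t)) • Φ(t) are Bochner integrable; (ii) the process (g_s(w̃_s))_{s∈[0,S]} is a martingale with respect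 to M, i.e. for all 0 ≤ s < v ≤ S and every E ∈ ℰ_s, ∫_E g_v(w̃_v(t)) • Φ(t) dμ = ∫_E g_s(w̃_s(t)) • Φ(t) dμ; (iii) the process (w̃_s g_s(w̃_s))_{s∈[0,S]} is a martingale with respect to M, i.e. for all 0 ≤ s < v ≤ S and every E ∈ ℰ_s, ∫_E w̃_v(t) g_v(w̃_v(t)) • Φ(t) dμ = ∫_E w̃_s(t) g_s(w̃_s(t)) • Φ(t) dμ. Define the X-valued measure Q(A) := ∫_A g_S(w̃_S(t)) • Φ(t) dμ. Then (w̃_s)_{s∈[0,S]} is a martingale with respect to Q: for all 0 ≤ s < v ≤ S and every E ∈ ℰ_s, ∫_E w̃_v(t) g_S(w̃_S(t)) • Φ(t) dμ = ∫_E w̃_s(t) g_S(w̃_S(t)) • Φ(t) dμ. -/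
open MeasureTheory

lemma key_pullout {T : Type*} {m : MeasurableSpace T}
    [m0 : MeasurableSpace T] (μ : Measure T) [IsFiniteMeasure μ]
    {X : Type*} [NormedAddCommGroup X] [NormedSpace ℝ X] [CompleteSpace X]
    (hm : m ≤ m0)
    {F G : T → X} (hF : Integrable F μ) (hG : Integrable G μ)
    (heq : ∀ A : Set T, MeasurableSet[m] A → ∫ t in A, F t ∂μ = ∫ t in A, G t ∂μ)
    {f : T → ℝ} (hf : StronglyMeasurable[m] f) {C : ℝ} (hC : ∀ t, |f t| ≤ C)
    {E : Set T} (hE : MeasurableSet[m] E) :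
    ∫ t in E, f t • F t ∂μ = ∫ t in E, f t • G t ∂μ := by
  haveI : SigmaFinite (μ.trim hm) := inferInstance
  have hfm0 : AEStronglyMeasurable f μ := (hf.mono hm).aestronglyMeasurable
  have hfmem : MemLp f ⊤ μ := memLp_top_of_bound hfm0 C (Filter.Eventually.of_forall hC)
  have hfF : Integrable (fun t => f t • F t) μ := hF.smul_of_top_right hfmem
  have hfG : Integrable (fun t => f t • G t) μ := hG.smul_of_top_right hfmem
  have key : ∀ φ : StrongDual ℝ X,
      φ (∫ t in E, f t • F t ∂μ) = φ (∫ t in E, f t • G t ∂μ) := by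
    intro φ
    set rF : T → ℝ := fun t => φ (F t) with hrFdef
    set rG : T → ℝ := fun t => φ (G t) with hrGdef
    have hrF : Integrable rF μ := φ.integrable_comp hF
    have hrG : Integrable rG μ := φ.integrable_comp hG
    have hfrF : Integrable (f * rF) μ :=
      hrF.bdd_mul hfm0 (Filter.Eventually.of_forall fun t => (hC t))
    have hfrG : Integrable (f * rG) μ :=
      hrG.bdd_mul hfm0 (Filter.Eventually.of_forall fun t => (hC t))
    have hcond : μ[rG|m] =ᵐ[μ] μ[rF|m] := by
      refine ae_eq_condExp_of_forall_setIntegral_eq hm hrF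
        (fun s _ _ => integrable_condExp.integrableOn) (fun s hs hμs => ?_)
        (StronglyMeasurable.aestronglyMeasurable stronglyMeasurable_condExp)
      rw [setIntegral_condExp hm hrG hs]
      calc ∫ t in s, rG t ∂μ = φ (∫ t in s, G t ∂μ) :=
            φ.integral_comp_comm hG.integrableOn
        _ = φ (∫ t in s, F t ∂μ) := by rw [heq s hs]
        _ = ∫ t in s, rF t ∂μ := (φ.integral_comp_comm hF.integrableOn).symm
    have hmulF : μ[f * rF|m] =ᵐ[μ] f * μ[rF|m] :=
      condExp_stronglyMeasurable_mul_of_bound hm hf hrF C (Filter.Eventually.of_forall hC)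
    have hmulG : μ[f * rG|m] =ᵐ[μ] f * μ[rG|m] :=
      condExp_stronglyMeasurable_mul_of_bound hm hf hrG C (Filter.Eventually.of_forall hC)
    calc φ (∫ t in E, f t • F t ∂μ) = ∫ t in E, φ (f t • F t) ∂μ :=
          (φ.integral_comp_comm hfF.integrableOn).symm
      _ = ∫ t in E, (f * rF) t ∂μ := by
          simp only [hrFdef, Pi.mul_apply, ContinuousLinearMap.map_smul, smul_eq_mul]
      _ = ∫ t in E, (μ[f * rF|m]) t ∂μ := (setIntegral_condExp hm hfrF hE).symm
      _ = ∫ t in E, (f * μ[rF|m]) t ∂μ := integral_congr_ae (ae_restrict_of_ae hmulF)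
      _ = ∫ t in E, (f * μ[rG|m]) t ∂μ := by
          refine integral_congr_ae (ae_restrict_of_ae ?_)
          filter_upwards [hcond] with t ht
          simp [Pi.mul_apply, ht]
      _ = ∫ t in E, (μ[f * rG|m]) t ∂μ := (integral_congr_ae (ae_restrict_of_ae hmulG)).symm
      _ = ∫ t in E, (f * rG) t ∂μ := setIntegral_condExp hm hfrG hE
      _ = ∫ t in E, φ (f t • G t) ∂μ := by
          simp only [hrGdef, Pi.mul_apply, ContinuousLinearMap.map_smul, smul_eq_mul]
      _ = φ (∫ t in E, f t • G t ∂μ) := φ.integral_comp_comm hfG.integrableOn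
  have := fun φ : StrongDual ℝ X => sub_eq_zero.mpr (key φ)
  have h0 : (∫ t in E, f t • F t ∂μ) - ∫ t in E, f t • G t ∂μ = 0 := by
    refine NormedSpace.eq_zero_of_forall_dual_eq_zero ℝ fun φ => ?_
    rw [map_sub]; exact this φ
  exact sub_eq_zero.mp h0

/-- Theorem 7, Girsanov-type theorem: martingale property under
the new measure.  With `M A = ∫_A Φ dμ`, `w̃_s = w_s + s q`,
`ℰ_s = σ(w_r : 0 ≤ r ≤ s)` and `Q A = ∫_A g_S(w̃_S) • Φ dμ`, if
(i) `g_s(w̃_s) • Φ` and `w̃_s g_s(w̃_s) • Φ` are Bochner integrable,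
(ii) `(g_s(w̃_s))_s` is a martingale w.r.t. `M`, and
(iii) `(w̃_s g_s(w̃_s))_s` is a martingale w.r.t. `M`,
then `(w̃_s)_s` is a martingale with respect to `Q`. -/
theorem statement9 {T : Type*} [MeasurableSpace T] (μ : Measure T)
    [IsFiniteMeasure μ]
    {X : Type*} [NormedAddCommGroup X] [NormedSpace ℝ X]
    (Φ : T → X) (hΦ : Integrable Φ μ)
    (S q : ℝ) (hS : 0 < S) (hq : 0 < q)
    (w : ℝ → T → ℝ) (hw : ∀ s ∈ Set.Icc (0 : ℝ) S, Measurable (w s))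
    (hwb : ∀ s ∈ Set.Icc (0 : ℝ) S, ∃ C : ℝ, ∀ t, |w s t| ≤ C)
    (g : ℝ → ℝ → ℝ) (hg : ∀ s ∈ Set.Icc (0 : ℝ) S, Measurable (g s))
    -- (i) integrability
    (hint : ∀ s ∈ Set.Icc (0 : ℝ) S,
      Integrable (fun t => g s (w s t + s * q) • Φ t) μ)
    (hint' : ∀ s ∈ Set.Icc (0 : ℝ) S,
      Integrable (fun t => ((w s t + s * q) * g s (w s t + s * q)) • Φ t) μ)
    -- (ii) `(g_s(w̃_s))_s` is a martingale with respect to `M`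
    (hmart : ∀ s v : ℝ, 0 ≤ s → s < v → v ≤ S →
      ∀ E : Set T,
        MeasurableSet[⨆ r ∈ Set.Icc (0 : ℝ) s,
          MeasurableSpace.comap (w r) inferInstance] E →
        ∫ t in E, g v (w v t + v * q) • Φ t ∂μ =
          ∫ t in E, g s (w s t + s * q) • Φ t ∂μ)
    -- (iii) `(w̃_s g_s(w̃_s))_s` is a martingale with respect to `M`
    (hmart' : ∀ s v : ℝ, 0 ≤ s → s < v → v ≤ S →
      ∀ E : Set T,
        MeasurableSet[⨆ r ∈ Set.Icc (0 : ℝ) s,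
          MeasurableSpace.comap (w r) inferInstance] E →
        ∫ t in E, ((w v t + v * q) * g v (w v t + v * q)) • Φ t ∂μ =
          ∫ t in E, ((w s t + s * q) * g s (w s t + s * q)) • Φ t ∂μ) :
    -- conclusion: `(w̃_s)_s` is a martingale with respect to `Q`
    ∀ s v : ℝ, 0 ≤ s → s < v → v ≤ S →
      ∀ E : Set T,
        MeasurableSet[⨆ r ∈ Set.Icc (0 : ℝ) s,
          MeasurableSpace.comap (w r) inferInstance] E →
        ∫ t in E, ((w v t + v * q) * g S (w S t + S * q)) • Φ t ∂μ =
          ∫ t in E, ((w s t + s * q) * g S (w S t + S * q)) • Φ t ∂μ := by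

  intro s v hs0 hsv hvS E hE
  by_cases hc : CompleteSpace X
  swap
  · simp [MeasureTheory.integral, hc]
  haveI := hc
  have hsS : s ∈ Set.Icc (0 : ℝ) S := ⟨hs0, hsv.le.trans hvS⟩
  have hvSm : v ∈ Set.Icc (0 : ℝ) S := ⟨hs0.trans hsv.le, hvS⟩
  -- the filtration
  set m0 : MeasurableSpace T := inferInstance with hm0
  have hmle : ∀ u ∈ Set.Icc (0 : ℝ) S,
      (⨆ r ∈ Set.Icc (0 : ℝ) u, MeasurableSpace.comap (w r) inferInstance) ≤ m0 :=
    fun u hu => iSup₂_le fun r hr =>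
      measurable_iff_comap_le.mp (hw r ⟨hr.1, hr.2.trans hu.2⟩)
  have hmono : (⨆ r ∈ Set.Icc (0 : ℝ) s, MeasurableSpace.comap (w r) inferInstance) ≤
      ⨆ r ∈ Set.Icc (0 : ℝ) v, MeasurableSpace.comap (w r) inferInstance :=
    biSup_mono fun r hr => ⟨hr.1, hr.2.trans hsv.le⟩
  -- the set-integral identity relating `g_S(w̃_S) • Φ` and `g_u(w̃_u) • Φ`
  have heqS : ∀ u, u ∈ Set.Icc (0 : ℝ) S →
      ∀ A : Set T,
        MeasurableSet[⨆ r ∈ Set.Icc (0 : ℝ) u,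
          MeasurableSpace.comap (w r) inferInstance] A →
        ∫ t in A, g S (w S t + S * q) • Φ t ∂μ =
          ∫ t in A, g u (w u t + u * q) • Φ t ∂μ := by
    intro u hu A hA
    rcases eq_or_lt_of_le hu.2 with h | h
    · subst h; rfl
    · exact hmart u S hu.1 h le_rfl A hA
  -- `w̃_u` is measurable w.r.t. the filtration at time `u` and bounded
  have hwtm : ∀ u, u ∈ Set.Icc (0 : ℝ) S →
      StronglyMeasurable[⨆ r ∈ Set.Icc (0 : ℝ) u,
        MeasurableSpace.comap (w r) inferInstance] (fun t => w u t + u * q) := by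
    intro u hu
    have h1 : MeasurableSpace.comap (w u) inferInstance ≤
        ⨆ r ∈ Set.Icc (0 : ℝ) u, MeasurableSpace.comap (w r) inferInstance :=
      le_biSup (fun r => MeasurableSpace.comap (w r) inferInstance)
        (⟨hu.1, le_rfl⟩ : u ∈ Set.Icc (0 : ℝ) u)
    have h2 : Measurable[⨆ r ∈ Set.Icc (0 : ℝ) u,
        MeasurableSpace.comap (w r) inferInstance] (w u) :=
      measurable_iff_comap_le.mpr h1
    exact (h2.add_const (u * q)).stronglyMeasurable
  have hwtb : ∀ u, u ∈ Set.Icc (0 : ℝ) S → ∃ C : ℝ, ∀ t, |w u t + u * q| ≤ C := by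
    intro u hu
    obtain ⟨C, hC⟩ := hwb u hu
    exact ⟨C + |u * q|, fun t => (abs_add_le _ _).trans (add_le_add (hC t) le_rfl)⟩
  obtain ⟨Cv, hCv⟩ := hwtb v hvSm
  obtain ⟨Cs, hCs⟩ := hwtb s hsS
  have hES : MeasurableSet[⨆ r ∈ Set.Icc (0 : ℝ) v,
      MeasurableSpace.comap (w r) inferInstance] E := hmono E hE
  calc ∫ t in E, ((w v t + v * q) * g S (w S t + S * q)) • Φ t ∂μ
      = ∫ t in E, (w v t + v * q) • (g S (w S t + S * q) • Φ t) ∂μ := by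
        simp_rw [mul_smul]
    _ = ∫ t in E, (w v t + v * q) • (g v (w v t + v * q) • Φ t) ∂μ :=
        key_pullout μ (hmle v hvSm) (hint S ⟨hS.le, le_rfl⟩) (hint v hvSm)
          (heqS v hvSm) (hwtm v hvSm) hCv hES
    _ = ∫ t in E, ((w v t + v * q) * g v (w v t + v * q)) • Φ t ∂μ := by
        simp_rw [mul_smul]
    _ = ∫ t in E, ((w s t + s * q) * g s (w s t + s * q)) • Φ t ∂μ :=
        hmart' s v hs0 hsv hvS E hE
    _ = ∫ t in E, (w s t + s * q) • (g s (w s t + s * q) • Φ t) ∂μ := by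
        simp_rw [mul_smul]
    _ = ∫ t in E, (w s t + s * q) • (g S (w S t + S * q) • Φ t) ∂μ :=
        (key_pullout μ (hmle s hsS) (hint S ⟨hS.le, le_rfl⟩) (hint s hsS)
          (heqS s hsS) (hwtm s hsS) hCs hE).symm
    _ = ∫ t in E, ((w s t + s * q) * g S (w S t + S * q)) • Φ t ∂μ := by
        simp_rw [mul_smul]
end
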